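/- arXiv:2510.08484 — 9 statements merged into one kernel-verified Lean document; each statement's English description precedes it below -/
import Mathlib

section
/- The classical value of Feige's game G_F equals 1/2. Precisely: (i) for every classical correlation of the form p(a,b|x,y) = Σ_{ω∈Ω} γ(ω)·p_ω(a|x)·q_ω(b|y), where Ω is a finite set, γ : Ω → [0,1] is a probability distribution, and for each ω, x, y the families p_ω(·|x) and q_ω(·|y) are probability distributions on {0,1,⊥}, the winning probability satisfies ω(p) ≤ 1/2; and (ii) there is a deterministic strategy, i.e. functions f, g : {0,1} → {0,1,⊥} with p(a,b|x,y) = 1 if a = f(x) and b = g(y) and 0 otherwise, whose winning probability equals exactly 1/2. -/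
open BigOperators

/-- Winning probability in Feige's game `G_F` of a correlation `p a b x y = p(a,b|x,y)`.
Questions are bits (`Bool`), answers lie in `Option Bool` where `none` plays the role of `⊥`
and `some c` the role of the bit `c`.  The players win on questions `(x,y)` and answers `(a,b)`
iff `(a,b) = (⊥, x)` or `(a,b) = (y, ⊥)`, and questions are uniformly distributed. -/
noncomputable def feigeWinProb (p : Option Bool → Option Bool → Bool → Bool → ℝ) : ℝ :=
  (1 / 4) * ∑ x : Bool, ∑ y : Bool, (p none (some x) x y + p (some y) none x y)

private lemma feige_key (u0 u1 v0 v1 a00 a01 a10 a11 b00 b01 b10 b11 : ℝ)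
 (h1 : 0 ≤ u0) (h2 : 0 ≤ u1) (h3 : 0 ≤ v0) (h4 : 0 ≤ v1)
 (h5 : 0 ≤ a00) (h6 : 0 ≤ a01) (h7 : 0 ≤ a10) (h8 : 0 ≤ a11)
 (h9 : 0 ≤ b00) (h10 : 0 ≤ b01) (h11 : 0 ≤ b10) (h12 : 0 ≤ b11)
 (hA0 : u0 + a00 + a01 = 1) (hA1 : u1 + a10 + a11 = 1)
 (hB0 : v0 + b00 + b01 = 1) (hB1 : v1 + b10 + b11 = 1) :
 u0*b00 + a00*v0 + u0*b10 + a01*v1 + u1*b01 + a10*v0 + u1*b11 + a11*v1 ≤ 2 := by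
  rcases le_total (u0+u1) 1 with hs | hs <;> rcases le_total (v0+v1) 1 with ht | ht
  · nlinarith [mul_nonneg h1 h10, mul_nonneg h1 h12, mul_nonneg h2 h9, mul_nonneg h2 h11,
      mul_nonneg h3 h6, mul_nonneg h3 h8, mul_nonneg h4 h5, mul_nonneg h4 h7,
      mul_nonneg (by linarith : (0:ℝ) ≤ 1-(u0+u1)) (by linarith : (0:ℝ) ≤ 1-(v0+v1))]
  · nlinarith [mul_nonneg h1 h10, mul_nonneg h1 h12, mul_nonneg h2 h9, mul_nonneg h2 h11,
      mul_nonneg (add_nonneg h5 h7) (by linarith : (0:ℝ) ≤ 1-v0),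
      mul_nonneg (add_nonneg h6 h8) (by linarith : (0:ℝ) ≤ 1-v1),
      mul_nonneg (add_nonneg h1 h2) (by linarith : (0:ℝ) ≤ (v0+v1)-1)]
  · nlinarith [mul_nonneg h3 h6, mul_nonneg h3 h8, mul_nonneg h4 h5, mul_nonneg h4 h7,
      mul_nonneg (add_nonneg h9 h11) (by linarith : (0:ℝ) ≤ 1-u0),
      mul_nonneg (add_nonneg h10 h12) (by linarith : (0:ℝ) ≤ 1-u1),
      mul_nonneg (add_nonneg h3 h4) (by linarith : (0:ℝ) ≤ (u0+u1)-1)]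
  · nlinarith [mul_nonneg (add_nonneg h9 h11) (by linarith : (0:ℝ) ≤ 1-u0),
      mul_nonneg (add_nonneg h10 h12) (by linarith : (0:ℝ) ≤ 1-u1),
      mul_nonneg (add_nonneg h5 h7) (by linarith : (0:ℝ) ≤ 1-v0),
      mul_nonneg (add_nonneg h6 h8) (by linarith : (0:ℝ) ≤ 1-v1)]

/-- The classical value of Feige's game equals `1/2`:
(i) every classical (local hidden-variable) correlation wins with probability at most `1/2`;
(ii) some deterministic strategy wins with probability exactly `1/2`. -/
theorem feige_classical_value :
    (∀ (Ω : Type) [Fintype Ω] (γ : Ω → ℝ) (pA pB : Ω → Bool → Option Bool → ℝ),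
      (∀ ω, 0 ≤ γ ω) → (∑ ω, γ ω = 1) →
      (∀ ω x a, 0 ≤ pA ω x a) → (∀ ω x, ∑ a : Option Bool, pA ω x a = 1) →
      (∀ ω y b, 0 ≤ pB ω y b) → (∀ ω y, ∑ b : Option Bool, pB ω y b = 1) →
      feigeWinProb (fun a b x y => ∑ ω, γ ω * pA ω x a * pB ω y b) ≤ 1 / 2)
    ∧ (∃ f g : Bool → Option Bool,
      feigeWinProb (fun a b x y => if a = f x ∧ b = g y then 1 else 0) = 1 / 2) := by
  constructor
  · intro Ω _ γ pA pB hγ hγ1 hA hA1 hB hB1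
    have hrw : feigeWinProb (fun a b x y => ∑ ω, γ ω * pA ω x a * pB ω y b)
        = ∑ ω, γ ω * ((pA ω false none * pB ω false (some false)
            + pA ω false (some false) * pB ω false none
            + pA ω false none * pB ω true (some false)
            + pA ω false (some true) * pB ω true none
            + pA ω true none * pB ω false (some true)
            + pA ω true (some false) * pB ω false none
            + pA ω true none * pB ω true (some true)
            + pA ω true (some true) * pB ω true none) / 4) := by
      simp only [feigeWinProb, Fintype.sum_bool, ← Finset.sum_add_distrib, Finset.mul_sum]
      refine Finset.sum_congr rfl fun ω _ => by ring
    rw [hrw]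
    have hbound : ∀ ω : Ω, γ ω * ((pA ω false none * pB ω false (some false)
            + pA ω false (some false) * pB ω false none
            + pA ω false none * pB ω true (some false)
            + pA ω false (some true) * pB ω true none
            + pA ω true none * pB ω false (some true)
            + pA ω true (some false) * pB ω false none
            + pA ω true none * pB ω true (some true)
            + pA ω true (some true) * pB ω true none) / 4) ≤ γ ω * (1/2) := by
      intro ω
      have hA0 := hA1 ω false
      have hA1' := hA1 ω true
      have hB0 := hB1 ω false
      have hB1' := hB1 ω true
      simp only [Fintype.sum_option, Fintype.sum_bool] at hA0 hA1' hB0 hB1'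
      have hk := feige_key (pA ω false none) (pA ω true none) (pB ω false none)
        (pB ω true none) (pA ω false (some false)) (pA ω false (some true))
        (pA ω true (some false)) (pA ω true (some true)) (pB ω false (some false))
        (pB ω false (some true)) (pB ω true (some false)) (pB ω true (some true))
        (hA ω false none) (hA ω true none) (hB ω false none) (hB ω true none)
        (hA ω false (some false)) (hA ω false (some true)) (hA ω true (some false))
        (hA ω true (some true)) (hB ω false (some false)) (hB ω false (some true))
        (hB ω true (some false)) (hB ω true (some true))
        (by linarith) (by linarith) (by linarith) (by linarith)
      have := hγ ω
      nlinarith [hk, hγ ω]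
    calc ∑ ω, γ ω * _ ≤ ∑ ω, γ ω * (1/2) := Finset.sum_le_sum fun ω _ => hbound ω
      _ = 1/2 := by rw [← Finset.sum_mul, hγ1]; ring
  · refine ⟨fun _ => none, fun _ => some false, ?_⟩
    simp only [feigeWinProb, Fintype.sum_bool]
    norm_num [show (some true ≠ none) from by simp, show (some false ≠ none) from by simp]
end

section
/- There exists a quantum strategy for Feige's game G_F using the 3-dimensional maximally entangled state that wins with probability exactly 9/16. Precisely: there exist projective measurements {P^x_a : a ∈ {0,1,⊥}} and {Q^y_b : b ∈ {0,1,⊥}} for x, y ∈ {0,1}, where each P^x_a and Q^y_b is a 3×3 complex self-adjoint idempotent matrix with Σ_a P^x_a = I₃ and Σ_b Q^y_b = I₃, such that (1/4)·Σ_{x,y∈{0,1}} ⟨ψ₃, (P^x_⊥ ⊗ Q^y_x + P^x_y ⊗ Q^y_⊥) ψ₃⟩ = 9/16, where ψ₃ = (1/√3)(|00⟩ + |11⟩ + |22⟩) ∈ ℂ³ ⊗ ℂ³ and ⊗ denotes the Kronecker product. -/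
open BigOperators Matrix Kronecker

/-- The maximally entangled state `ψ₃ = (1/√3)(|00⟩ + |11⟩ + |22⟩) ∈ ℂ³ ⊗ ℂ³`,
realizing the tensor product `ℂ³ ⊗ ℂ³` as functions on `Fin 3 × Fin 3`. -/
noncomputable def psi3 : Fin 3 × Fin 3 → ℂ :=
  fun ij => if ij.1 = ij.2 then 1 / (Real.sqrt 3 : ℂ) else 0

/-- Rank-one projector onto a real vector, as a complex matrix. -/
noncomputable def projv (v : Fin 3 → ℝ) : Matrix (Fin 3) (Fin 3) ℂ :=
  Matrix.of fun i j => ((v i * v j : ℝ) : ℂ)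

lemma projv_herm (v : Fin 3 → ℝ) : (projv v).IsHermitian := by
  ext i j
  simp [projv, Matrix.conjTranspose_apply, mul_comm]

lemma projv_idem (v : Fin 3 → ℝ) (hv : v 0 ^ 2 + v 1 ^ 2 + v 2 ^ 2 = 1) :
    projv v * projv v = projv v := by
  have hC : (v 0 : ℂ) ^ 2 + (v 1 : ℂ) ^ 2 + (v 2 : ℂ) ^ 2 = 1 := by exact_mod_cast hv
  ext i j
  simp only [projv, Matrix.mul_apply, Matrix.of_apply, Fin.sum_univ_succ,
    Finset.univ_unique, Finset.sum_singleton, Fin.default_eq_zero,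
    Fin.succ_zero_eq_one, Fin.succ_one_eq_two]
  push_cast
  linear_combination ((v i : ℂ) * (v j : ℂ)) * hC

/-- Alice's measurement vectors. -/
noncomputable def vP : Bool → Option Bool → Fin 3 → ℝ
  | false, none => ![1, 0, 0]
  | false, some false => ![0, 1, 0]
  | false, some true => ![0, 0, 1]
  | true, none => ![-(1/2), -(Real.sqrt 6)/4, -(Real.sqrt 6)/4]
  | true, some false => ![Real.sqrt 6/4, -(3/4), 1/4]
  | true, some true => ![-(Real.sqrt 6)/4, -(1/4), 3/4]

/-- Bob's measurement vectors. -/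
noncomputable def vQ : Bool → Option Bool → Fin 3 → ℝ
  | false, none => ![-(1/4), 3*Real.sqrt 6/8, -(Real.sqrt 6)/8]
  | false, some false => ![-(3*Real.sqrt 6)/8, -(1/8), 3/8]
  | false, some true => ![Real.sqrt 6/8, 3/8, 7/8]
  | true, none => ![-(1/4), -(Real.sqrt 6)/8, 3*Real.sqrt 6/8]
  | true, some false => ![3*Real.sqrt 6/8, -(3/8), 1/8]
  | true, some true => ![Real.sqrt 6/8, 7/8, 3/8]

lemma h6R : Real.sqrt 6 * Real.sqrt 6 = 6 := Real.mul_self_sqrt (by norm_num)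

lemma h6C : (Real.sqrt 6 : ℂ) * (Real.sqrt 6 : ℂ) = 6 := by exact_mod_cast h6R

lemma vP_norm (x : Bool) (a : Option Bool) :
    vP x a 0 ^ 2 + vP x a 1 ^ 2 + vP x a 2 ^ 2 = 1 := by
  have h6 := h6R
  rcases x with _ | _ <;> rcases a with _ | _ | _ <;>
    simp only [vP, Matrix.cons_val_zero, Matrix.cons_val_one, Matrix.head_cons,
      Matrix.cons_val_two, Matrix.tail_cons] <;>
    first
      | linear_combination (0 : ℝ) * h6
      | linear_combination (1/8 : ℝ) * h6
      | linear_combination (1/16 : ℝ) * h6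

lemma vQ_norm (y : Bool) (b : Option Bool) :
    vQ y b 0 ^ 2 + vQ y b 1 ^ 2 + vQ y b 2 ^ 2 = 1 := by
  have h6 := h6R
  rcases y with _ | _ <;> rcases b with _ | _ | _ <;>
    simp only [vQ, Matrix.cons_val_zero, Matrix.cons_val_one, Matrix.head_cons,
      Matrix.cons_val_two, Matrix.tail_cons] <;>
    first
      | linear_combination (5/32 : ℝ) * h6
      | linear_combination (9/64 : ℝ) * h6
      | linear_combination (1/64 : ℝ) * h6

lemma star_psi3 : star psi3 = psi3 := by
  funext ij
  simp only [Pi.star_apply, psi3]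
  split <;> simp

set_option maxHeartbeats 1000000 in
lemma key (A B : Matrix (Fin 3) (Fin 3) ℂ) :
    star psi3 ⬝ᵥ ((A ⊗ₖ B).mulVec psi3) = (∑ i, ∑ j, A i j * B i j) / 3 := by
  have hinv : ((Real.sqrt 3 : ℂ))⁻¹ * ((Real.sqrt 3 : ℂ))⁻¹ = 1/3 := by
    rw [← mul_inv]
    rw [show (Real.sqrt 3 : ℂ) * (Real.sqrt 3 : ℂ) = 3 by
      exact_mod_cast Real.mul_self_sqrt (by norm_num : (0:ℝ) ≤ 3)]
    norm_num
  rw [star_psi3]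
  simp only [dotProduct, Matrix.mulVec, psi3, Fintype.sum_prod_type,
    Fin.sum_univ_succ, Matrix.kroneckerMap_apply, Finset.univ_unique,
    Finset.sum_singleton, Fin.default_eq_zero]
  norm_num [Fin.ext_iff]
  linear_combination (A 0 0 * B 0 0 + A 0 1 * B 0 1 + A 0 2 * B 0 2
    + A 1 0 * B 1 0 + A 1 1 * B 1 1 + A 1 2 * B 1 2
    + A 2 0 * B 2 0 + A 2 1 * B 2 1 + A 2 2 * B 2 2) * hinv

set_option maxHeartbeats 2000000 in
/-- There is a quantum strategy for Feige's game using the 3-dimensional maximally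
entangled state, with projective measurements on `ℂ³`, winning with probability `9/16`.
Questions are `Bool`, answers are `Option Bool` with `none` playing the role of `⊥`. -/
theorem feige_quantum_strategy_nine_sixteenths :
    ∃ P Q : Bool → Option Bool → Matrix (Fin 3) (Fin 3) ℂ,
      (∀ x a, (P x a).IsHermitian) ∧ (∀ x a, P x a * P x a = P x a) ∧
      (∀ x, ∑ a : Option Bool, P x a = 1) ∧
      (∀ y b, (Q y b).IsHermitian) ∧ (∀ y b, Q y b * Q y b = Q y b) ∧
      (∀ y, ∑ b : Option Bool, Q y b = 1) ∧
      (1 / 4 : ℂ) * ∑ x : Bool, ∑ y : Bool,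
        star psi3 ⬝ᵥ ((P x none ⊗ₖ Q y (some x) + P x (some y) ⊗ₖ Q y none).mulVec psi3)
        = 9 / 16 := by
  refine ⟨fun x a => projv (vP x a), fun y b => projv (vQ y b),
    fun x a => projv_herm _, fun x a => projv_idem _ (vP_norm x a),
    ?_, fun y b => projv_herm _, fun y b => projv_idem _ (vQ_norm y b), ?_, ?_⟩
  · intro x
    ext i j
    rcases x with _ | _ <;> fin_cases i <;> fin_cases j <;>
      simp only [Fintype.sum_option, Fintype.sum_bool, Matrix.add_apply,
        Matrix.one_apply, projv, vP, Matrix.of_apply, Matrix.cons_val_zero,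
        Matrix.cons_val_one, Matrix.head_cons, Matrix.cons_val_two, Matrix.tail_cons,
        if_true, if_false] <;>
      norm_num <;>
      push_cast <;>
      first
        | linear_combination (0 : ℂ) * h6C
        | linear_combination (1/8 : ℂ) * h6C
        | linear_combination (1/16 : ℂ) * h6C
  · intro y
    ext i j
    rcases y with _ | _ <;> fin_cases i <;> fin_cases j <;>
      simp only [Fintype.sum_option, Fintype.sum_bool, Matrix.add_apply,
        Matrix.one_apply, projv, vQ, Matrix.of_apply, Matrix.cons_val_zero,
        Matrix.cons_val_one, Matrix.head_cons, Matrix.cons_val_two, Matrix.tail_cons,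
        if_true, if_false] <;>
      norm_num <;>
      push_cast <;>
      first
        | linear_combination (0 : ℂ) * h6C
        | linear_combination (5/32 : ℂ) * h6C
        | linear_combination (9/64 : ℂ) * h6C
        | linear_combination (1/64 : ℂ) * h6C
        | linear_combination (-3/64 : ℂ) * h6C
  · simp only [Matrix.add_mulVec, dotProduct_add, key, Fintype.sum_bool]
    simp only [Fin.sum_univ_succ, Finset.univ_unique, Finset.sum_singleton,
      Fin.default_eq_zero, Fin.succ_zero_eq_one, Fin.succ_one_eq_two, projv, vP, vQ, Matrix.of_apply, Matrix.cons_val_zero,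
      Matrix.cons_val_one, Matrix.head_cons, Matrix.cons_val_two, Matrix.tail_cons]
    push_cast
    linear_combination (3/32 : ℂ) * h6C
end

section
/- The non-signalling value of Feige's game G_F equals 2/3. Precisely, 2/3 is the greatest element of the set of winning probabilities ω(p) = (1/4)·Σ_{x,y∈{0,1}} [p(⊥,x|x,y) + p(y,⊥|x,y)] over all non-signalling correlations p: every non-signalling correlation satisfies ω(p) ≤ 2/3, and there exists a non-signalling correlation with ω(p) = 2/3. -/
open BigOperators

/-- `p` is a non-signalling correlation for Feige's game: nonnegative, normalized, and
Alice's (resp. Bob's) marginals are independent of Bob's (resp. Alice's) question. -/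
def IsNSCorrelation (p : Option Bool → Option Bool → Bool → Bool → ℝ) : Prop :=
  (∀ a b x y, 0 ≤ p a b x y) ∧
  (∀ x y, ∑ a : Option Bool, ∑ b : Option Bool, p a b x y = 1) ∧
  (∀ b y x x', ∑ a : Option Bool, p a b x y = ∑ a : Option Bool, p a b x' y) ∧
  (∀ a x y y', ∑ b : Option Bool, p a b x y = ∑ b : Option Bool, p a b x y')

noncomputable def feigeP (a b : Option Bool) (x y : Bool) : ℝ :=
  if (a = none ∧ b = some x) ∨ (a = some y ∧ b = none) ∨ (a = some (!y) ∧ b = some (!x))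
  then 1/3 else 0

/-- The non-signalling value of Feige's game equals `2/3`: `2/3` is the greatest element of
the set of winning probabilities of non-signalling correlations. -/
theorem feige_ns_value :
    IsGreatest {w : ℝ | ∃ p, IsNSCorrelation p ∧ feigeWinProb p = w} (2 / 3) := by
  constructor
  · refine ⟨feigeP, ⟨?_, ?_, ?_, ?_⟩, ?_⟩
    · intro a b x y
      unfold feigeP
      split <;> norm_num
    · intro x y
      cases x <;> cases y <;>
        simp [Fintype.sum_option, feigeP] <;> norm_num
    · intro b y x x'
      cases b with
      | none => cases y <;> cases x <;> cases x' <;>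
          simp [Fintype.sum_option, feigeP]
      | some c => cases c <;> cases y <;> cases x <;> cases x' <;>
          simp [Fintype.sum_option, feigeP]
    · intro a x y y'
      cases a with
      | none => cases x <;> cases y <;> cases y' <;>
          simp [Fintype.sum_option, feigeP]
      | some c => cases c <;> cases x <;> cases y <;> cases y' <;>
          simp [Fintype.sum_option, feigeP]
    · simp [feigeWinProb, feigeP]
      norm_num
  · rintro w ⟨p, ⟨hpos, hnorm, hA, hB⟩, rfl⟩
    simp only [feigeWinProb, Fintype.sum_bool]
    have n1 := hnorm false false
    have n2 := hnorm false true
    have n3 := hnorm true false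
    have n4 := hnorm true true
    simp only [Fintype.sum_option, Fintype.sum_bool] at n1 n2 n3 n4
    have a1 := hA none false false true
    have a2 := hA none true false true
    have a3 := hA (some false) false false true
    have a4 := hA (some false) true false true
    have a5 := hA (some true) false false true
    have a6 := hA (some true) true false true
    simp only [Fintype.sum_option, Fintype.sum_bool] at a1 a2 a3 a4 a5 a6
    have b1 := hB none false false true
    have b2 := hB none true false true
    have b3 := hB (some false) false false true
    have b4 := hB (some false) true false true
    have b5 := hB (some true) false false true
    have b6 := hB (some true) true false true
    simp only [Fintype.sum_option, Fintype.sum_bool] at b1 b2 b3 b4 b5 b6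
    have h := fun a b x y => hpos a b x y
    linarith [hpos none none false false, hpos none none false true, hpos none none true false, hpos none none true true,
      hpos none (some false) false false, hpos none (some false) false true, hpos none (some false) true false, hpos none (some false) true true,
      hpos none (some true) false false, hpos none (some true) false true, hpos none (some true) true false, hpos none (some true) true true,
      hpos (some false) none false false, hpos (some false) none false true, hpos (some false) none true false, hpos (some false) none true true,
      hpos (some true) none false false, hpos (some true) none false true, hpos (some true) none true false, hpos (some true) none true true,
      hpos (some false) (some false) false false, hpos (some false) (some false) false true, hpos (some false) (some false) true false, hpos (some false) (some false) true true,
      hpos (some false) (some true) false false, hpos (some false) (some true) false true, hpos (some false) (some true) true false, hpos (some false) (some true) true true,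
      hpos (some true) (some false) false false, hpos (some true) (some false) false true, hpos (some true) (some false) true false, hpos (some true) (some false) true true,
      hpos (some true) (some true) false false, hpos (some true) (some true) false true, hpos (some true) (some true) true false, hpos (some true) (some true) true true]
end

section
/- For every even n = 2m (m ≥ 1), the non-signalling value of the n-fold parallel repetition of Feige's game is at most 1/2^{n/2}: every non-signalling correlation p for G_F^{×n} satisfies (1/4^n)·Σ_{x,y ∈ {0,1}^n} Σ_{I ⊆ {1,…,n}} p(a_I(y), b_I(x) | x, y) ≤ 1/2^m. -/
open BigOperators


lemma cyl_sum (n : ℕ) (J : Finset (Fin n)) (c : Fin n → Bool) (C : ℝ)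
    [DecidablePred fun y : Fin n → Bool => ∀ i ∉ J, y i = c i] :
    ∑ y : Fin n → Bool, (if (∀ i ∉ J, y i = c i) then C else 0) = 2 ^ J.card * C := by
  classical
  rw [Finset.sum_ite, Finset.sum_const, Finset.sum_const_zero, add_zero]
  have hcard : (Finset.univ.filter fun y : Fin n → Bool => ∀ i ∉ J, y i = c i).card
      = 2 ^ J.card := by
    rw [← Fintype.card_subtype]
    have e : {y : Fin n → Bool // ∀ i ∉ J, y i = c i} ≃ ({i // i ∈ J} → Bool) :=
      { toFun := fun y i => y.1 i.1
        invFun := fun z => ⟨fun i => if h : i ∈ J then z ⟨i, h⟩ else c i, by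
          intro i hi; simp [hi]⟩
        left_inv := by
          intro y; ext i; by_cases h : i ∈ J <;> simp [h, y.2 i]
        right_inv := by
          intro z; ext i; simp [i.2] }
    rw [Fintype.card_congr e, Fintype.card_fun, Fintype.card_coe]; rfl
  rw [hcard, nsmul_eq_mul]; push_cast; ring

lemma countA (n : ℕ) (a : Fin n → Option Bool) :
    ∑ y : Fin n → Bool, ∑ I : Finset (Fin n),
      (if a = fun i => if i ∈ I then none else some (y i) then (1:ℝ) / 2 ^ I.card else 0)
      = 1 := by
  classical
  set J : Finset (Fin n) := Finset.univ.filter (fun i => a i = none) with hJ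
  set c : Fin n → Bool := fun i => (a i).getD false with hc
  have key : ∀ (I : Finset (Fin n)) (y : Fin n → Bool),
      (a = fun i => if i ∈ I then none else some (y i)) ↔ (I = J ∧ ∀ i ∉ J, y i = c i) := by
    intro I y
    constructor
    · intro h
      have hIJ : I = J := by
        ext i
        simp only [hJ, Finset.mem_filter, Finset.mem_univ, true_and]
        rw [congrFun h i]
        by_cases hi : i ∈ I <;> simp [hi]
      subst hIJ
      refine ⟨rfl, fun i hi => ?_⟩
      have := congrFun h i
      rw [if_neg hi] at this
      simp [hc, this]
    · rintro ⟨rfl, hy⟩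
      funext i
      by_cases hi : i ∈ J
      · rw [if_pos hi]
        exact (Finset.mem_filter.mp hi).2
      · rw [if_neg hi]
        have hne : a i ≠ none := by
          intro hcon
          exact hi (Finset.mem_filter.mpr ⟨Finset.mem_univ i, hcon⟩)
        obtain ⟨t, ht⟩ := Option.ne_none_iff_exists'.mp hne
        rw [ht, hy i hi, hc]
        simp [ht]
  have step : ∀ y : Fin n → Bool,
      (∑ I : Finset (Fin n),
        (if a = fun i => if i ∈ I then none else some (y i) then (1:ℝ) / 2 ^ I.card else 0))
      = if (∀ i ∉ J, y i = c i) then (1:ℝ) / 2 ^ J.card else 0 := by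
    intro y
    by_cases hy : ∀ i ∉ J, y i = c i
    · rw [if_pos hy]
      have h1 : ∀ I : Finset (Fin n),
          (if a = fun i => if i ∈ I then none else some (y i) then (1:ℝ) / 2 ^ I.card else 0)
          = if I = J then (1:ℝ) / 2 ^ J.card else 0 := by
        intro I
        by_cases hI : I = J
        · subst hI
          rw [if_pos ((key J y).mpr ⟨rfl, hy⟩), if_pos rfl]
        · rw [if_neg, if_neg hI]
          rw [key]; tauto
      rw [Finset.sum_congr rfl fun I _ => h1 I]
      simp
    · rw [if_neg hy]
      apply Finset.sum_eq_zero
      intro I _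
      rw [if_neg]
      rw [key]; tauto
  rw [Finset.sum_congr rfl fun y _ => step y, cyl_sum]
  rw [mul_one_div, div_self]
  positivity

lemma countB (n : ℕ) (b : Fin n → Option Bool) :
    ∑ x : Fin n → Bool, ∑ I : Finset (Fin n),
      (if b = fun i => if i ∈ I then some (x i) else none then (2:ℝ) ^ I.card else 0)
      = 2 ^ n := by
  classical
  set K : Finset (Fin n) := Finset.univ.filter (fun i => b i ≠ none) with hK
  set c : Fin n → Bool := fun i => (b i).getD false with hc
  have key : ∀ (I : Finset (Fin n)) (x : Fin n → Bool),
      (b = fun i => if i ∈ I then some (x i) else none) ↔ (I = K ∧ ∀ i ∉ Kᶜ, x i = c i) := by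
    intro I x
    constructor
    · intro h
      have hIK : I = K := by
        ext i
        simp only [hK, Finset.mem_filter, Finset.mem_univ, true_and]
        rw [congrFun h i]
        by_cases hi : i ∈ I <;> simp [hi]
      subst hIK
      refine ⟨rfl, fun i hi => ?_⟩
      rw [Finset.notMem_compl] at hi
      have := congrFun h i
      rw [if_pos hi] at this
      simp [hc, this]
    · rintro ⟨rfl, hx⟩
      funext i
      by_cases hi : i ∈ K
      · rw [if_pos hi]
        have hne : b i ≠ none := (Finset.mem_filter.mp hi).2
        obtain ⟨t, ht⟩ := Option.ne_none_iff_exists'.mp hne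
        have hxi : x i = c i := hx i (by rwa [Finset.notMem_compl])
        rw [ht, hxi, hc]
        simp [ht]
      · rw [if_neg hi]
        have : ¬ b i ≠ none := by
          intro hcon
          exact hi (Finset.mem_filter.mpr ⟨Finset.mem_univ i, hcon⟩)
        simpa using this
  have step : ∀ x : Fin n → Bool,
      (∑ I : Finset (Fin n),
        (if b = fun i => if i ∈ I then some (x i) else none then (2:ℝ) ^ I.card else 0))
      = if (∀ i ∉ Kᶜ, x i = c i) then (2:ℝ) ^ K.card else 0 := by
    intro x
    by_cases hx : ∀ i ∉ Kᶜ, x i = c i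
    · rw [if_pos hx]
      have h1 : ∀ I : Finset (Fin n),
          (if b = fun i => if i ∈ I then some (x i) else none then (2:ℝ) ^ I.card else 0)
          = if I = K then (2:ℝ) ^ K.card else 0 := by
        intro I
        by_cases hI : I = K
        · subst hI
          rw [if_pos ((key K x).mpr ⟨rfl, hx⟩), if_pos rfl]
        · rw [if_neg, if_neg hI]
          rw [key]; tauto
      rw [Finset.sum_congr rfl fun I _ => h1 I]
      simp
    · rw [if_neg hx]
      apply Finset.sum_eq_zero
      intro I _
      rw [if_neg]
      rw [key]; tauto
  rw [Finset.sum_congr rfl fun x _ => step x, cyl_sum]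
  rw [← pow_add]
  congr 1
  have h1 := Finset.card_compl_add_card K
  have h2 : Fintype.card (Fin n) = n := Fintype.card_fin n
  omega

lemma feige_two_le_aux (t : ℝ) (ht : 0 < t) : 2 ≤ t + t⁻¹ := by
  have h : t * t⁻¹ = 1 := mul_inv_cancel₀ ht.ne'
  nlinarith [sq_nonneg (t - 1)]

/-- For an even number `n = 2m` of repetitions, the non-signalling value of the `n`-fold
parallel repetition of Feige's game is at most `1/2^{n/2} = 1/2^m`.  Questions are tuples
in `Fin (2m) → Bool`, answers are tuples in `Fin (2m) → Option Bool` (`none` = `⊥`); the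
winning answer pairs for questions `(x, y)` are exactly `(a_I(y), b_I(x))` for subsets
`I ⊆ {1, …, n}`, where `(a_I(y))_i = ⊥` for `i ∈ I` and `y_i` otherwise, and
`(b_I(x))_i = x_i` for `i ∈ I` and `⊥` otherwise. -/
theorem feige_parallel_even_ns_upper_bound (m : ℕ) (hm : 1 ≤ m)
    (p : (Fin (2 * m) → Option Bool) → (Fin (2 * m) → Option Bool) →
         (Fin (2 * m) → Bool) → (Fin (2 * m) → Bool) → ℝ)
    (hpos : ∀ a b x y, 0 ≤ p a b x y)
    (hnorm : ∀ x y, ∑ a, ∑ b, p a b x y = 1)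
    (hnsA : ∀ b x x' y, ∑ a, p a b x y = ∑ a, p a b x' y)
    (hnsB : ∀ a x y y', ∑ b, p a b x y = ∑ b, p a b x y') :
    (1 / 4 ^ (2 * m) : ℝ) *
      ∑ x : Fin (2 * m) → Bool, ∑ y : Fin (2 * m) → Bool, ∑ I : Finset (Fin (2 * m)),
        p (fun i => if i ∈ I then none else some (y i))
          (fun i => if i ∈ I then some (x i) else none) x y
      ≤ 1 / 2 ^ m := by
  classical
  set y0 : Fin (2 * m) → Bool := fun _ => false with hy0
  set α : (Fin (2 * m) → Option Bool) → (Fin (2 * m) → Bool) → ℝ :=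
    fun a x => ∑ b, p a b x y0 with hα
  set β : (Fin (2 * m) → Option Bool) → (Fin (2 * m) → Bool) → ℝ :=
    fun b y => ∑ a, p a b y0 y with hβ
  have hα1 : ∀ x, ∑ a, α a x = 1 := fun x => hnorm x y0
  have hβ1 : ∀ y, ∑ b, β b y = 1 := by
    intro y
    rw [hβ]
    rw [Finset.sum_comm]
    exact hnorm y0 y
  have hαpos : ∀ a x, 0 ≤ α a x := fun a x =>
    Finset.sum_nonneg fun b _ => hpos _ _ _ _
  have hβpos : ∀ b y, 0 ≤ β b y := fun b y =>
    Finset.sum_nonneg fun a _ => hpos _ _ _ _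
  have hpA : ∀ (x y : Fin (2 * m) → Bool) (I : Finset (Fin (2 * m))),
      p (fun i => if i ∈ I then none else some (y i))
        (fun i => if i ∈ I then some (x i) else none) x y
      ≤ α (fun i => if i ∈ I then none else some (y i)) x := by
    intro x y I
    calc p _ _ x y ≤ ∑ b, p (fun i => if i ∈ I then none else some (y i)) b x y :=
          Finset.single_le_sum (fun b _ => hpos _ _ _ _) (Finset.mem_univ _)
      _ = α _ x := hnsB _ x y y0
  have hpB : ∀ (x y : Fin (2 * m) → Bool) (I : Finset (Fin (2 * m))),
      p (fun i => if i ∈ I then none else some (y i))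
        (fun i => if i ∈ I then some (x i) else none) x y
      ≤ β (fun i => if i ∈ I then some (x i) else none) y := by
    intro x y I
    calc p _ _ x y ≤ ∑ a, p a (fun i => if i ∈ I then some (x i) else none) x y :=
          Finset.single_le_sum (fun a _ => hpos _ _ _ _) (Finset.mem_univ _)
      _ = β _ y := hnsA _ x y0 y
  -- the two weighted sums
  have hS1 : ∑ x : Fin (2 * m) → Bool, ∑ y : Fin (2 * m) → Bool, ∑ I : Finset (Fin (2 * m)),
      ((2:ℝ) ^ m / 2 ^ I.card) *
        p (fun i => if i ∈ I then none else some (y i))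
          (fun i => if i ∈ I then some (x i) else none) x y
      ≤ 2 ^ (3 * m) := by
    have inner1 : ∀ x : Fin (2 * m) → Bool,
        (∑ y : Fin (2 * m) → Bool, ∑ I : Finset (Fin (2 * m)),
          ((2:ℝ) ^ m / 2 ^ I.card) * α (fun i => if i ∈ I then none else some (y i)) x)
        = 2 ^ m := by
      intro x
      calc (∑ y : Fin (2 * m) → Bool, ∑ I : Finset (Fin (2 * m)),
            ((2:ℝ) ^ m / 2 ^ I.card) * α (fun i => if i ∈ I then none else some (y i)) x)
          = ∑ y : Fin (2 * m) → Bool, ∑ I : Finset (Fin (2 * m)),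
              ∑ a : Fin (2 * m) → Option Bool,
              (if a = fun i => if i ∈ I then none else some (y i) then
                ((2:ℝ) ^ m / 2 ^ I.card) * α a x else 0) := by
            refine Finset.sum_congr rfl fun y _ => Finset.sum_congr rfl fun I _ => ?_
            rw [Finset.sum_ite_eq' Finset.univ
              (fun i => if i ∈ I then none else some (y i))
              (fun a => ((2:ℝ) ^ m / 2 ^ I.card) * α a x)]
            simp
        _ = ∑ y : Fin (2 * m) → Bool, ∑ a : Fin (2 * m) → Option Bool,
              ∑ I : Finset (Fin (2 * m)),
              (if a = fun i => if i ∈ I then none else some (y i) then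
                ((2:ℝ) ^ m / 2 ^ I.card) * α a x else 0) :=
            Finset.sum_congr rfl fun y _ => Finset.sum_comm
        _ = ∑ a : Fin (2 * m) → Option Bool, ∑ y : Fin (2 * m) → Bool,
              ∑ I : Finset (Fin (2 * m)),
              (if a = fun i => if i ∈ I then none else some (y i) then
                ((2:ℝ) ^ m / 2 ^ I.card) * α a x else 0) :=
            Finset.sum_comm
        _ = ∑ a : Fin (2 * m) → Option Bool, ((2:ℝ) ^ m * α a x) *
              ∑ y : Fin (2 * m) → Bool, ∑ I : Finset (Fin (2 * m)),
              (if a = fun i => if i ∈ I then none else some (y i) then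
                (1:ℝ) / 2 ^ I.card else 0) := by
            refine Finset.sum_congr rfl fun a _ => ?_
            rw [Finset.mul_sum]
            refine Finset.sum_congr rfl fun y _ => ?_
            rw [Finset.mul_sum]
            refine Finset.sum_congr rfl fun I _ => ?_
            by_cases h : a = fun i => if i ∈ I then none else some (y i)
            · rw [if_pos h, if_pos h]; ring
            · rw [if_neg h, if_neg h]; ring
        _ = ∑ a : Fin (2 * m) → Option Bool, ((2:ℝ) ^ m * α a x) * 1 := by
            refine Finset.sum_congr rfl fun a _ => ?_
            rw [countA (2 * m) a]
        _ = 2 ^ m := by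
            simp only [mul_one]
            rw [← Finset.mul_sum, hα1 x, mul_one]
    calc (∑ x : Fin (2 * m) → Bool, ∑ y : Fin (2 * m) → Bool, ∑ I : Finset (Fin (2 * m)),
          ((2:ℝ) ^ m / 2 ^ I.card) *
            p (fun i => if i ∈ I then none else some (y i))
              (fun i => if i ∈ I then some (x i) else none) x y)
        ≤ ∑ x : Fin (2 * m) → Bool, ∑ y : Fin (2 * m) → Bool, ∑ I : Finset (Fin (2 * m)),
            ((2:ℝ) ^ m / 2 ^ I.card) * α (fun i => if i ∈ I then none else some (y i)) x := by
          refine Finset.sum_le_sum fun x _ => Finset.sum_le_sum fun y _ =>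
            Finset.sum_le_sum fun I _ => ?_
          exact mul_le_mul_of_nonneg_left (hpA x y I) (by positivity)
      _ = ∑ x : Fin (2 * m) → Bool, (2:ℝ) ^ m := Finset.sum_congr rfl fun x _ => inner1 x
      _ = 2 ^ (2 * m) * 2 ^ m := by
          rw [Finset.sum_const, Finset.card_univ, nsmul_eq_mul]
          congr 1
          rw [Fintype.card_fun, Fintype.card_fin]
          push_cast
          rfl
      _ = 2 ^ (3 * m) := by rw [← pow_add]; congr 1; ring
  have hS2 : ∑ x : Fin (2 * m) → Bool, ∑ y : Fin (2 * m) → Bool, ∑ I : Finset (Fin (2 * m)),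
      ((2:ℝ) ^ I.card / 2 ^ m) *
        p (fun i => if i ∈ I then none else some (y i))
          (fun i => if i ∈ I then some (x i) else none) x y
      ≤ 2 ^ (3 * m) := by
    have inner2 : ∀ y : Fin (2 * m) → Bool,
        (∑ x : Fin (2 * m) → Bool, ∑ I : Finset (Fin (2 * m)),
          ((2:ℝ) ^ I.card / 2 ^ m) * β (fun i => if i ∈ I then some (x i) else none) y)
        = 2 ^ m := by
      intro y
      calc (∑ x : Fin (2 * m) → Bool, ∑ I : Finset (Fin (2 * m)),
            ((2:ℝ) ^ I.card / 2 ^ m) * β (fun i => if i ∈ I then some (x i) else none) y)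
          = ∑ x : Fin (2 * m) → Bool, ∑ I : Finset (Fin (2 * m)),
              ∑ b : Fin (2 * m) → Option Bool,
              (if b = fun i => if i ∈ I then some (x i) else none then
                ((2:ℝ) ^ I.card / 2 ^ m) * β b y else 0) := by
            refine Finset.sum_congr rfl fun x _ => Finset.sum_congr rfl fun I _ => ?_
            rw [Finset.sum_ite_eq' Finset.univ
              (fun i => if i ∈ I then some (x i) else none)
              (fun b => ((2:ℝ) ^ I.card / 2 ^ m) * β b y)]
            simp
        _ = ∑ x : Fin (2 * m) → Bool, ∑ b : Fin (2 * m) → Option Bool,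
              ∑ I : Finset (Fin (2 * m)),
              (if b = fun i => if i ∈ I then some (x i) else none then
                ((2:ℝ) ^ I.card / 2 ^ m) * β b y else 0) :=
            Finset.sum_congr rfl fun x _ => Finset.sum_comm
        _ = ∑ b : Fin (2 * m) → Option Bool, ∑ x : Fin (2 * m) → Bool,
              ∑ I : Finset (Fin (2 * m)),
              (if b = fun i => if i ∈ I then some (x i) else none then
                ((2:ℝ) ^ I.card / 2 ^ m) * β b y else 0) :=
            Finset.sum_comm
        _ = ∑ b : Fin (2 * m) → Option Bool, (β b y / 2 ^ m) *
              ∑ x : Fin (2 * m) → Bool, ∑ I : Finset (Fin (2 * m)),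
              (if b = fun i => if i ∈ I then some (x i) else none then
                (2:ℝ) ^ I.card else 0) := by
            refine Finset.sum_congr rfl fun b _ => ?_
            rw [Finset.mul_sum]
            refine Finset.sum_congr rfl fun x _ => ?_
            rw [Finset.mul_sum]
            refine Finset.sum_congr rfl fun I _ => ?_
            by_cases h : b = fun i => if i ∈ I then some (x i) else none
            · rw [if_pos h, if_pos h]; ring
            · rw [if_neg h, if_neg h]; ring
        _ = ∑ b : Fin (2 * m) → Option Bool, (β b y / 2 ^ m) * 2 ^ (2 * m) := by
            refine Finset.sum_congr rfl fun b _ => ?_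
            rw [countB (2 * m) b]
        _ = 2 ^ m := by
            have : ∀ b : Fin (2 * m) → Option Bool,
                (β b y / 2 ^ m) * 2 ^ (2 * m) = (2:ℝ) ^ m * β b y := by
              intro b
              rw [show (2:ℝ) ^ (2 * m) = 2 ^ m * 2 ^ m by rw [← pow_add]; congr 1; ring]
              field_simp
            rw [Finset.sum_congr rfl fun b _ => this b, ← Finset.mul_sum, hβ1 y, mul_one]
    calc (∑ x : Fin (2 * m) → Bool, ∑ y : Fin (2 * m) → Bool, ∑ I : Finset (Fin (2 * m)),
          ((2:ℝ) ^ I.card / 2 ^ m) *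
            p (fun i => if i ∈ I then none else some (y i))
              (fun i => if i ∈ I then some (x i) else none) x y)
        ≤ ∑ x : Fin (2 * m) → Bool, ∑ y : Fin (2 * m) → Bool, ∑ I : Finset (Fin (2 * m)),
            ((2:ℝ) ^ I.card / 2 ^ m) * β (fun i => if i ∈ I then some (x i) else none) y := by
          refine Finset.sum_le_sum fun x _ => Finset.sum_le_sum fun y _ =>
            Finset.sum_le_sum fun I _ => ?_
          exact mul_le_mul_of_nonneg_left (hpB x y I) (by positivity)
      _ = ∑ y : Fin (2 * m) → Bool, ∑ x : Fin (2 * m) → Bool, ∑ I : Finset (Fin (2 * m)),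
            ((2:ℝ) ^ I.card / 2 ^ m) * β (fun i => if i ∈ I then some (x i) else none) y :=
          Finset.sum_comm
      _ = ∑ y : Fin (2 * m) → Bool, (2:ℝ) ^ m := Finset.sum_congr rfl fun y _ => inner2 y
      _ = 2 ^ (2 * m) * 2 ^ m := by
          rw [Finset.sum_const, Finset.card_univ, nsmul_eq_mul]
          congr 1
          rw [Fintype.card_fun, Fintype.card_fin]
          push_cast
          rfl
      _ = 2 ^ (3 * m) := by rw [← pow_add]; congr 1; ring
  -- AM-GM combination
  have hw : ∀ I : Finset (Fin (2 * m)),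
      (2:ℝ) ≤ 2 ^ m / 2 ^ I.card + 2 ^ I.card / 2 ^ m := by
    intro I
    have ht : (0:ℝ) < 2 ^ m / 2 ^ I.card := by positivity
    have h2 : ((2:ℝ) ^ m / 2 ^ I.card)⁻¹ = 2 ^ I.card / 2 ^ m := by
      rw [inv_div]
    have := feige_two_le_aux _ ht
    rwa [h2] at this
  set S : ℝ := ∑ x : Fin (2 * m) → Bool, ∑ y : Fin (2 * m) → Bool,
      ∑ I : Finset (Fin (2 * m)),
        p (fun i => if i ∈ I then none else some (y i))
          (fun i => if i ∈ I then some (x i) else none) x y with hSdef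
  have hcomb : 2 * S ≤ 2 ^ (3 * m) + 2 ^ (3 * m) := by
    have h2S : 2 * S = ∑ x : Fin (2 * m) → Bool, ∑ y : Fin (2 * m) → Bool,
        ∑ I : Finset (Fin (2 * m)),
          2 * p (fun i => if i ∈ I then none else some (y i))
            (fun i => if i ∈ I then some (x i) else none) x y := by
      rw [hSdef, Finset.mul_sum]
      refine Finset.sum_congr rfl fun x _ => ?_
      rw [Finset.mul_sum]
      refine Finset.sum_congr rfl fun y _ => ?_
      rw [Finset.mul_sum]
    rw [h2S]
    calc (∑ x : Fin (2 * m) → Bool, ∑ y : Fin (2 * m) → Bool,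
          ∑ I : Finset (Fin (2 * m)),
            2 * p (fun i => if i ∈ I then none else some (y i))
              (fun i => if i ∈ I then some (x i) else none) x y)
        ≤ ∑ x : Fin (2 * m) → Bool, ∑ y : Fin (2 * m) → Bool,
            ∑ I : Finset (Fin (2 * m)),
            (((2:ℝ) ^ m / 2 ^ I.card) *
              p (fun i => if i ∈ I then none else some (y i))
                (fun i => if i ∈ I then some (x i) else none) x y
            + ((2:ℝ) ^ I.card / 2 ^ m) *
              p (fun i => if i ∈ I then none else some (y i))
                (fun i => if i ∈ I then some (x i) else none) x y) := by
          refine Finset.sum_le_sum fun x _ => Finset.sum_le_sum fun y _ =>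
            Finset.sum_le_sum fun I _ => ?_
          rw [← add_mul]
          exact mul_le_mul_of_nonneg_right (hw I) (hpos _ _ _ _)
      _ ≤ 2 ^ (3 * m) + 2 ^ (3 * m) := by
          simp only [Finset.sum_add_distrib]
          exact add_le_add hS1 hS2
  have hSbound : S ≤ 2 ^ (3 * m) := by linarith
  have hSnonneg : 0 ≤ S := by
    rw [hSdef]
    exact Finset.sum_nonneg fun x _ => Finset.sum_nonneg fun y _ =>
      Finset.sum_nonneg fun I _ => hpos _ _ _ _
  calc (1 / 4 ^ (2 * m) : ℝ) * S ≤ (1 / 4 ^ (2 * m) : ℝ) * 2 ^ (3 * m) := by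
        exact mul_le_mul_of_nonneg_left hSbound (by positivity)
    _ = 1 / 2 ^ m := by
        rw [show (4:ℝ) = 2 ^ 2 by norm_num, ← pow_mul]
        rw [show 2 * (2 * m) = m + 3 * m by ring, pow_add]
        field_simp
end

section
/- For every m ≥ 1 there is a deterministic strategy for the 2m-fold parallel repetition of Feige's game with winning probability exactly 1/2^m. Concretely, the strategy where on question tuples (x_1,…,x_{2m}) and (y_1,…,y_{2m}) Alice answers a_{2i−1} = ⊥ and a_{2i} = x_{2i−1}, and Bob answers b_{2i−1} = y_{2i} and b_{2i} = ⊥, for 1 ≤ i ≤ m, wins with probability 1/2^m. -/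
open BigOperators

/-- The winning predicate of the `n`-fold parallel repetition of Feige's game: on questions
`x, y : Fin n → Bool` and answers `a, b : Fin n → Option Bool` (`none` = `⊥`), the players
win iff in every coordinate `i`, `(a_i, b_i) = (⊥, x_i)` or `(a_i, b_i) = (y_i, ⊥)`. -/
def FeigeWinN {n : ℕ} (x y : Fin n → Bool) (a b : Fin n → Option Bool) : Prop :=
  ∀ i, (a i = none ∧ b i = some (x i)) ∨ (a i = some (y i) ∧ b i = none)

instance {n : ℕ} (x y : Fin n → Bool) (a b : Fin n → Option Bool) :
    Decidable (FeigeWinN x y a b) := by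
  unfold FeigeWinN; infer_instance

/-- Alice's deterministic strategy for the `2m`-fold repetition (`0`-indexed coordinates,
so coordinate `2i-1` of the paper is even here and `2i` is odd):
`a_{2i-1} = ⊥` and `a_{2i} = x_{2i-1}`. -/
def feigeAliceStrat (m : ℕ) (x : Fin (2 * m) → Bool) (i : Fin (2 * m)) : Option Bool :=
  if i.val % 2 = 0 then none
  else some (x ⟨i.val - 1, lt_of_le_of_lt (Nat.sub_le _ _) i.isLt⟩)

/-- Bob's deterministic strategy for the `2m`-fold repetition:
`b_{2i-1} = y_{2i}` and `b_{2i} = ⊥`. -/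
def feigeBobStrat (m : ℕ) (y : Fin (2 * m) → Bool) (i : Fin (2 * m)) : Option Bool :=
  if i.val % 2 = 0 then some (y ⟨(i.val + 1) % (2 * m), Nat.mod_lt _ i.pos⟩)
  else none

lemma feige_win_iff (m : ℕ) (x y : Fin (2 * m) → Bool) :
    FeigeWinN x y (feigeAliceStrat m x) (feigeBobStrat m y) ↔
      ∀ j : Fin (2 * m), j.val % 2 = 1 →
        y j = x ⟨j.val - 1, lt_of_le_of_lt (Nat.sub_le _ _) j.isLt⟩ := by
  constructor
  · intro h j hj
    have hj0 : ¬ j.val % 2 = 0 := by omega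
    rcases h j with ⟨ha, _⟩ | ⟨ha, _⟩
    · simp [feigeAliceStrat, hj0] at ha
    · simp [feigeAliceStrat, hj0] at ha
      exact ha.symm
  · intro h i
    by_cases hi : i.val % 2 = 0
    · left
      have hlt : i.val + 1 < 2 * m := by omega
      have hmod : (i.val + 1) % (2 * m) = i.val + 1 := Nat.mod_eq_of_lt hlt
      have hodd : (⟨(i.val + 1) % (2 * m), Nat.mod_lt _ i.pos⟩ : Fin (2*m)).val % 2 = 1 := by
        simp [hmod]; omega
      have := h _ hodd
      refine ⟨by simp [feigeAliceStrat, hi], ?_⟩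
      simp only [feigeBobStrat, hi, if_pos]
      congr 1
      rw [this]
      congr 1
      exact Fin.ext (by simp [hmod])
    · right
      have := h i (by omega)
      refine ⟨?_, by simp [feigeBobStrat, hi]⟩
      simp [feigeAliceStrat, hi, this]

lemma range_prod (m : ℕ) :
    ∏ k ∈ Finset.range (2 * m), (if k % 2 = 1 then (1:ℝ) else 2) = 2 ^ m := by
  induction m with
  | zero => simp
  | succ n ih =>
      have : 2 * (n + 1) = (2 * n + 1) + 1 := by ring
      rw [this, Finset.prod_range_succ, Finset.prod_range_succ, ih]
      have h1 : (2 * n) % 2 = 0 := by omega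
      have h2 : (2 * n + 1) % 2 = 1 := by omega
      simp [h1, h2]
      ring

lemma feige_inner_sum (m : ℕ) (x : Fin (2 * m) → Bool) :
    ∑ y : Fin (2 * m) → Bool,
      (if FeigeWinN x y (feigeAliceStrat m x) (feigeBobStrat m y) then (1 : ℝ) else 0)
      = 2 ^ m := by
  set c : Fin (2 * m) → Bool → ℝ := fun j b =>
    if j.val % 2 = 1 then
      (if b = x ⟨j.val - 1, lt_of_le_of_lt (Nat.sub_le _ _) j.isLt⟩ then 1 else 0)
    else 1 with hc
  have key : ∀ y : Fin (2 * m) → Bool,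
      (if FeigeWinN x y (feigeAliceStrat m x) (feigeBobStrat m y) then (1 : ℝ) else 0)
        = ∏ j, c j (y j) := by
    intro y
    split_ifs with hw
    · rw [feige_win_iff] at hw
      refine (Finset.prod_eq_one fun j _ => ?_).symm
      simp only [hc]
      split_ifs with h1 h2
      · rfl
      · exact absurd (hw j h1) h2
      · rfl
    · rw [feige_win_iff] at hw
      push_neg at hw
      obtain ⟨j, hj, hne⟩ := hw
      refine (Finset.prod_eq_zero (Finset.mem_univ j) ?_).symm
      simp [hc, hj, hne]
  rw [Finset.sum_congr rfl fun y _ => key y]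
  have : ∑ y : Fin (2 * m) → Bool, ∏ j, c j (y j)
      = ∏ j : Fin (2 * m), ∑ b : Bool, c j b := by
    rw [Finset.prod_univ_sum]
    rw [Fintype.piFinset_univ]
  rw [this]
  have hcb : ∀ j : Fin (2 * m), ∑ b : Bool, c j b
      = (if j.val % 2 = 1 then (1:ℝ) else 2) := by
    intro j
    simp only [hc]
    split_ifs with h1
    · simp
    · simp
  rw [Finset.prod_congr rfl fun j _ => hcb j]
  rw [Fin.prod_univ_eq_prod_range (fun k => if k % 2 = 1 then (1:ℝ) else 2)]
  exact range_prod m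

/-- For every `m ≥ 1`, the above deterministic strategy for the `2m`-fold parallel
repetition of Feige's game wins with probability exactly `1/2^m`. -/
theorem feige_parallel_even_classical_strategy (m : ℕ) (hm : 1 ≤ m) :
    (1 / 4 ^ (2 * m) : ℝ) *
      ∑ x : Fin (2 * m) → Bool, ∑ y : Fin (2 * m) → Bool,
        (if FeigeWinN x y (feigeAliceStrat m x) (feigeBobStrat m y) then (1 : ℝ) else 0)
      = 1 / 2 ^ m := by
  rw [Finset.sum_congr rfl fun x _ => feige_inner_sum m x]
  rw [Finset.sum_const, Finset.card_univ]
  have hcard : Fintype.card (Fin (2 * m) → Bool) = 2 ^ (2 * m) := by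
    simp [Fintype.card_fun]
  rw [hcard]
  have h4 : (4 : ℝ) ^ (2 * m) = 2 ^ (4 * m) := by
    rw [show (4:ℝ) = 2^2 by norm_num, ← pow_mul]; ring_nf
  rw [h4]
  rw [nsmul_eq_mul]
  push_cast
  rw [div_mul_eq_mul_div, one_mul, div_eq_div_iff (by positivity) (by positivity)]
  rw [← pow_add, one_mul, ← pow_add]
  ring_nf
end

section
/- Let ν = (ν_{ij}) be an n×n matrix with strictly positive real entries and suppose H is an n×n unitary complex matrix with |h_{ij}| = √(ν_{ij}) for all i,j. Assume that for every pair of indices a, b there exists an index l such that Σ_{k ≠ l} √(ν_{ak})·√(ν_{bk}) = √(ν_{al})·√(ν_{bl}). Then every n×n unitary matrix H' with |h'_{ij}| = √(ν_{ij}) for all i,j is equivalent to H: there exist permutation matrices P, P' and diagonal unitary matrices D, D' such that H' = P·D·H·D'·P'. -/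
open BigOperators Matrix

def permMatrixC {n : ℕ} (σ : Equiv.Perm (Fin n)) : Matrix (Fin n) (Fin n) ℂ :=
  Matrix.of fun i j => if σ j = i then 1 else 0

lemma permMatrixC_one {n : ℕ} : permMatrixC (1 : Equiv.Perm (Fin n)) = 1 := by
  ext i j
  simp [permMatrixC, Matrix.one_apply, eq_comm]

lemma tri_eq {ι : Type*} (s : Finset ι) (z : ι → ℂ)
    (h : ‖∑ k ∈ s, z k‖ = ∑ k ∈ s, ‖z k‖) :
    ∀ k ∈ s, z k * (‖∑ j ∈ s, z j‖ : ℂ)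
      = (‖z k‖ : ℂ) * ∑ j ∈ s, z j := by
  set S : ℂ := ∑ j ∈ s, z j with hS
  have hle : ∀ k ∈ s, ((starRingEnd ℂ) S * z k).re ≤ ‖S‖ * ‖z k‖ := by
    intro k _
    calc ((starRingEnd ℂ) S * z k).re ≤ ‖(starRingEnd ℂ) S * z k‖ :=
          Complex.re_le_norm _
      _ = ‖S‖ * ‖z k‖ := by
          rw [norm_mul, Complex.norm_conj]
  have hsum : ∑ k ∈ s, ((starRingEnd ℂ) S * z k).re
      = ∑ k ∈ s, ‖S‖ * ‖z k‖ := by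
    rw [← Complex.re_sum, ← Finset.mul_sum, ← Finset.mul_sum, ← h, ← hS]
    have : (starRingEnd ℂ) S * S = ((‖S‖ : ℝ) : ℂ) ^ 2 := by
      rw [mul_comm, Complex.mul_conj']
    rw [this]
    simp [sq]
  have heach := (Finset.sum_eq_sum_iff_of_le hle).mp hsum
  intro k hk
  have hk' : ((starRingEnd ℂ) S * z k).re = ‖(starRingEnd ℂ) S * z k‖ := by
    rw [heach k hk, norm_mul, Complex.norm_conj]
  have hw : (starRingEnd ℂ) S * z k = ((‖S‖ * ‖z k‖ : ℝ) : ℂ) := by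
    set w := (starRingEnd ℂ) S * z k with hwdef
    have him : w.im = 0 := by
      have h2 : ‖w‖ ^ 2 = w.re ^ 2 + w.im ^ 2 := by
        rw [Complex.sq_norm, Complex.normSq_apply]; ring
      rw [← hk'] at h2
      nlinarith [h2]
    have hre : w.re = ‖S‖ * ‖z k‖ := heach k hk
    rw [Complex.ext_iff]
    constructor
    · simpa using hre
    · simpa using him
  by_cases hS0 : ‖S‖ = 0
  · have : S = 0 := by rwa [norm_eq_zero] at hS0
    rw [this]; simp
  · have hc : ((‖S‖ : ℝ) : ℂ) ≠ 0 := by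
      simpa using hS0
    apply mul_left_cancel₀ hc
    have h3 := congrArg (fun t => S * t) hw
    rw [← mul_assoc, Complex.mul_conj'] at h3
    push_cast at h3 ⊢
    linear_combination h3


/-- Let `ν` be an `n × n` matrix of strictly positive reals and suppose `H` is a unitary
matrix with `|H i j| = √(ν i j)`.  If for every pair `a, b` there is an index `l` with
`Σ_{k ≠ l} √(ν a k)·√(ν b k) = √(ν a l)·√(ν b l)`, then every unitary `H'` with
`|H' i j| = √(ν i j)` is equivalent to `H`: there are permutation matrices `P, P'` and
diagonal unitaries `D, D'` with `H' = P · D · H · D' · P'`. -/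
theorem unitary_with_prescribed_moduli_unique (n : ℕ) (ν : Fin n → Fin n → ℝ)
    (hν : ∀ i j, 0 < ν i j)
    (H : Matrix (Fin n) (Fin n) ℂ) (hH₁ : Hᴴ * H = 1) (hH₂ : H * Hᴴ = 1)
    (hHmod : ∀ i j, ‖H i j‖ = Real.sqrt (ν i j))
    (hcond : ∀ a b, ∃ l, ∑ k ∈ Finset.univ.erase l,
        Real.sqrt (ν a k) * Real.sqrt (ν b k) = Real.sqrt (ν a l) * Real.sqrt (ν b l)) :
    ∀ H' : Matrix (Fin n) (Fin n) ℂ, H'ᴴ * H' = 1 → H' * H'ᴴ = 1 →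
      (∀ i j, ‖H' i j‖ = Real.sqrt (ν i j)) →
      ∃ (σ σ' : Equiv.Perm (Fin n)) (D D' : Fin n → ℂ),
        (∀ i, ‖D i‖ = 1) ∧ (∀ i, ‖D' i‖ = 1) ∧
        H' = permMatrixC σ * Matrix.diagonal D * H * Matrix.diagonal D' * permMatrixC σ' := by
  intro H' hH'₁ hH'₂ hH'mod
  rcases Nat.eq_zero_or_pos n with h0 | hn
  · subst h0
    refine ⟨1, 1, fun i => i.elim0, fun i => i.elim0, fun i => i.elim0, fun i => i.elim0, ?_⟩
    ext i j; exact i.elim0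
  haveI : NeZero n := ⟨hn.ne'⟩
  have hsq : ∀ i j : Fin n, (0:ℝ) < Real.sqrt (ν i j) := fun i j => Real.sqrt_pos.mpr (hν i j)
  have hHne : ∀ i j, H i j ≠ 0 := by
    intro i j h
    have := hHmod i j; rw [h] at this; simp at this
    exact (hsq i j).ne' this.symm
  have hH'ne : ∀ i j, H' i j ≠ 0 := by
    intro i j h
    have := hH'mod i j; rw [h] at this; simp at this
    exact (hsq i j).ne' this.symm
  set u : Fin n → Fin n → ℂ := fun i j => H' i j / H i j with hu
  have huabs : ∀ i j, ‖u i j‖ = 1 := by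
    intro i j
    rw [hu]
    simp only [norm_div, hHmod, hH'mod]
    exact div_self (hsq i j).ne'
  have hune : ∀ i j, u i j ≠ 0 := by
    intro i j h
    have := huabs i j; rw [h] at this; simp at this
  have horth : ∀ (M : Matrix (Fin n) (Fin n) ℂ), M * Mᴴ = 1 → ∀ a b : Fin n, a ≠ b →
      ∑ k, M a k * (starRingEnd ℂ) (M b k) = 0 := by
    intro M hM a b hab
    have h1 := congrFun (congrFun hM a) b
    rw [Matrix.mul_apply] at h1
    simp only [Matrix.conjTranspose_apply, RCLike.star_def] at h1
    rw [h1]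
    simp [Matrix.one_apply, hab]
  have main : ∀ a b k : Fin n, u a k * (starRingEnd ℂ) (u b k)
      = u a 0 * (starRingEnd ℂ) (u b 0) := by
    intro a b k
    rcases eq_or_ne a b with rfl | hab
    · rw [Complex.mul_conj, Complex.mul_conj, Complex.normSq_eq_norm_sq, Complex.normSq_eq_norm_sq,
        huabs, huabs]
    obtain ⟨l, hl⟩ := hcond a b
    set z : Fin n → ℂ := fun k => H a k * (starRingEnd ℂ) (H b k) with hz
    set z' : Fin n → ℂ := fun k => H' a k * (starRingEnd ℂ) (H' b k) with hz'
    have habs : ∀ k, ‖z k‖ = Real.sqrt (ν a k) * Real.sqrt (ν b k) := by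
      intro k
      show ‖H a k * (starRingEnd ℂ) (H b k)‖ = _
      rw [norm_mul, Complex.norm_conj, hHmod, hHmod]
    have habs' : ∀ k, ‖z' k‖ = Real.sqrt (ν a k) * Real.sqrt (ν b k) := by
      intro k
      show ‖H' a k * (starRingEnd ℂ) (H' b k)‖ = _
      rw [norm_mul, Complex.norm_conj, hH'mod, hH'mod]
    have hzl : ‖z l‖ ≠ 0 := by
      rw [habs]; exact (mul_pos (hsq a l) (hsq b l)).ne'
    have hzne : ∀ k, z k ≠ 0 := by
      intro k h
      have h2 := habs k; rw [h] at h2; simp at h2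
      rcases h2 with h2 | h2
      · exact (hsq a k).ne' h2
      · exact (hsq b k).ne' h2
    have key : ∀ (w : Fin n → ℂ), (∑ k, w k = 0) →
        (∀ k, ‖w k‖ = Real.sqrt (ν a k) * Real.sqrt (ν b k)) →
        ∀ k, k ≠ l → w k * (‖z l‖ : ℂ) = -(‖w k‖ : ℂ) * w l := by
      intro w hsum hwabs k hkl
      have hSl : ∑ j ∈ Finset.univ.erase l, w j = -(w l) := by
        rw [Finset.sum_erase_eq_sub (Finset.mem_univ l), hsum]; ring
      have hSabs : ‖∑ j ∈ Finset.univ.erase l, w j‖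
          = ∑ j ∈ Finset.univ.erase l, ‖w j‖ := by
        rw [hSl, norm_neg, hwabs, ← hl]
        exact Finset.sum_congr rfl (fun j _ => (hwabs j).symm)
      have h3 := tri_eq _ _ hSabs k (Finset.mem_erase.mpr ⟨hkl, Finset.mem_univ k⟩)
      rw [hSl] at h3
      rw [habs l, ← hwabs l]
      calc w k * (‖w l‖ : ℂ)
          = w k * ‖-(w l)‖ := by rw [norm_neg]
        _ = (‖w k‖ : ℂ) * (-(w l)) := h3
        _ = -(‖w k‖ : ℂ) * w l := by ring
    have hsum0 : ∑ k, z k = 0 := horth H hH₂ a b hab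
    have hsum0' : ∑ k, z' k = 0 := horth H' hH'₂ a b hab
    have hc : ((‖z l‖ : ℝ) : ℂ) ≠ 0 := by simpa using hzl
    have hcross : ∀ j : Fin n, z' j * z l = z j * z' l := by
      intro j
      rcases eq_or_ne j l with rfl | hjl
      · ring
      have h1 := key z hsum0 habs j hjl
      have h2 := key z' hsum0' habs' j hjl
      rw [habs' j, ← habs j] at h2
      apply mul_left_cancel₀ hc
      linear_combination z l * h2 - z' l * h1
    have huform : ∀ j : Fin n, u a j * (starRingEnd ℂ) (u b j) = z' j / z j := by
      intro j
      rw [hu]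
      show (H' a j / H a j) * (starRingEnd ℂ) (H' b j / H b j)
          = (H' a j * (starRingEnd ℂ) (H' b j)) / (H a j * (starRingEnd ℂ) (H b j))
      rw [map_div₀]
      field_simp
    rw [huform k, huform 0, div_eq_div_iff (hzne k) (hzne 0)]
    have hck := hcross k
    have hc0 := hcross 0
    have hzlne : z l ≠ 0 := hzne l
    apply mul_right_cancel₀ hzlne
    linear_combination z 0 * hck - z k * hc0
  refine ⟨1, 1, fun a => u a 0 * (starRingEnd ℂ) (u 0 0), fun k => u 0 k, ?_, ?_, ?_⟩
  · intro i
    rw [norm_mul, Complex.norm_conj, huabs, huabs, mul_one]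
  · intro i; exact huabs 0 i
  · rw [permMatrixC_one, Matrix.one_mul, Matrix.mul_one]
    ext a k
    have hent : (Matrix.diagonal (fun a => u a 0 * (starRingEnd ℂ) (u 0 0)) * H *
        Matrix.diagonal (fun k => u 0 k)) a k
        = (u a 0 * (starRingEnd ℂ) (u 0 0)) * H a k * u 0 k := by
      rw [Matrix.mul_diagonal, Matrix.diagonal_mul]
    rw [hent]
    have hm := main a 0 k
    have hone : (starRingEnd ℂ) (u 0 k) * u 0 k = 1 := by
      rw [mul_comm, Complex.mul_conj, Complex.normSq_eq_norm_sq, huabs]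
      norm_num
    have hak : u a k = (u a 0 * (starRingEnd ℂ) (u 0 0)) * u 0 k := by
      calc u a k = u a k * ((starRingEnd ℂ) (u 0 k) * u 0 k) := by rw [hone, mul_one]
        _ = (u a k * (starRingEnd ℂ) (u 0 k)) * u 0 k := by ring
        _ = (u a 0 * (starRingEnd ℂ) (u 0 0)) * u 0 k := by rw [hm]
    have hHk : u a k * H a k = H' a k := by
      rw [hu]
      exact div_mul_cancel₀ _ (hHne a k)
    rw [← hHk, hak]
    ring
end

section
/- Let p be a non-signalling correlation for the n-fold parallel repetition of Feige's game, let I ⊆ {1,…,n}, let y ∈ {0,1}^n be fixed, let J be a set of functions from the complement I^c to {0,1}, and let z ∈ {0,1}^n be arbitrary. Then Σ over all x ∈ {0,1}^n whose restriction to I^c lies in J of p(a_I(y), b_I(x) | x, y) is at most |J| · Σ over all functions u : I → {0,1} of Σ over all a ∈ {0,1,⊥}^n of p(a, b_I(u) | z, y), where b_I(u) ∈ {0,1,⊥}^n is given by (b_I(u))_i = u(i) for i ∈ I and ⊥ for i ∉ I. -/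
open BigOperators

/-- Restriction lemma for non-signalling correlations of the `n`-fold parallel repetition of
Feige's game.  Questions are tuples in `Fin n → Bool`, answers in `Fin n → Option Bool`
(`none` = `⊥`).  For `I ⊆ {1, …, n}`, `a_I(y)_i = ⊥` if `i ∈ I` and `y_i` otherwise, and
`b_I(x)_i = x_i` if `i ∈ I` and `⊥` otherwise.  For any set `J` of functions from `I^c` to
`{0,1}` and any `z`, the sum of `p(a_I(y), b_I(x) | x, y)` over all `x` whose restriction
to `I^c` lies in `J` is at most `|J|` times the sum over functions `u : I → {0,1}` and all
answers `a` of `p(a, b_I(u) | z, y)`. -/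
theorem feige_ns_restriction_bound (n : ℕ)
    (p : (Fin n → Option Bool) → (Fin n → Option Bool) →
         (Fin n → Bool) → (Fin n → Bool) → ℝ)
    (hpos : ∀ a b x y, 0 ≤ p a b x y)
    (hnorm : ∀ x y, ∑ a, ∑ b, p a b x y = 1)
    (hnsA : ∀ b x x' y, ∑ a, p a b x y = ∑ a, p a b x' y)
    (hnsB : ∀ a x y y', ∑ b, p a b x y = ∑ b, p a b x y')
    (I : Finset (Fin n)) (y z : Fin n → Bool)
    (J : Finset (({i : Fin n // i ∉ I}) → Bool)) :
    ∑ x : Fin n → Bool,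
      (if (fun i : {i : Fin n // i ∉ I} => x i.1) ∈ J then
        p (fun i => if i ∈ I then none else some (y i))
          (fun i => if i ∈ I then some (x i) else none) x y
      else 0)
    ≤ (J.card : ℝ) *
      ∑ u : ({i : Fin n // i ∈ I}) → Bool, ∑ a : Fin n → Option Bool,
        p a (fun i => if h : i ∈ I then some (u ⟨i, h⟩) else none) z y := by
  classical
  set S : ({i : Fin n // i ∈ I} → Bool) → ℝ := fun u =>
    ∑ a : Fin n → Option Bool,
      p a (fun i => if h : i ∈ I then some (u ⟨i, h⟩) else none) z y with hS
  have step1 : ∀ x : Fin n → Bool,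
      (if (fun i : {i : Fin n // i ∉ I} => x i.1) ∈ J then
        p (fun i => if i ∈ I then none else some (y i))
          (fun i => if i ∈ I then some (x i) else none) x y else 0)
      ≤ (if (fun i : {i : Fin n // i ∉ I} => x i.1) ∈ J then
          S (fun j : {i : Fin n // i ∈ I} => x j.1) else 0) := by
    intro x
    by_cases hx : (fun i : {i : Fin n // i ∉ I} => x i.1) ∈ J
    · simp only [hx, if_true]
      have hb : (fun i => if i ∈ I then some (x i) else none) =
          (fun i => if h : i ∈ I then
            some ((fun j : {i : Fin n // i ∈ I} => x j.1) ⟨i, h⟩) else none) := by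
        funext i; by_cases h : i ∈ I <;> simp [h]
      have h1 : p (fun i => if i ∈ I then none else some (y i))
          (fun i => if i ∈ I then some (x i) else none) x y
          ≤ ∑ a, p a (fun i => if i ∈ I then some (x i) else none) x y :=
        Finset.single_le_sum (fun a _ => hpos a _ x y) (Finset.mem_univ _)
      calc p (fun i => if i ∈ I then none else some (y i))
            (fun i => if i ∈ I then some (x i) else none) x y
          ≤ ∑ a, p a (fun i => if i ∈ I then some (x i) else none) x y := h1
        _ = ∑ a, p a (fun i => if i ∈ I then some (x i) else none) z y := hnsA _ x z y
        _ = S (fun j : {i : Fin n // i ∈ I} => x j.1) := by rw [hb]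
    · simp [hx]
  refine le_trans (Finset.sum_le_sum fun x _ => step1 x) (le_of_eq ?_)
  set e := (Equiv.piEquivPiSubtypeProd (fun i : Fin n => i ∈ I) (fun _ => Bool)) with he
  rw [← Equiv.sum_comp e.symm
    (fun x : Fin n → Bool => if (fun i : {i : Fin n // i ∉ I} => x i.1) ∈ J then
      S (fun j : {i : Fin n // i ∈ I} => x j.1) else 0)]
  have key : ∀ q : ({i : Fin n // i ∈ I} → Bool) × ({i : Fin n // ¬ i ∈ I} → Bool),
      (if (fun i : {i : Fin n // i ∉ I} => (e.symm q) i.1) ∈ J then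
        S (fun j : {i : Fin n // i ∈ I} => (e.symm q) j.1) else 0)
      = (if q.2 ∈ J then S q.1 else 0) := by
    intro q
    have h1 : (fun i : {i : Fin n // i ∉ I} => (e.symm q) i.1) = q.2 := by
      funext i
      simp [he, Equiv.piEquivPiSubtypeProd_symm_apply, i.2]
    have h2 : (fun j : {i : Fin n // i ∈ I} => (e.symm q) j.1) = q.1 := by
      funext j
      simp [he, Equiv.piEquivPiSubtypeProd_symm_apply, j.2]
    rw [h1, h2]
  rw [Fintype.sum_congr _ _ key, Fintype.sum_prod_type]
  have : ∀ u : {i : Fin n // i ∈ I} → Bool,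
      ∑ v : {i : Fin n // i ∉ I} → Bool, (if v ∈ J then S u else 0)
        = (J.card : ℝ) * S u := by
    intro u
    rw [Finset.sum_ite_mem, Finset.univ_inter, Finset.sum_const, nsmul_eq_mul]
  simp only [this]
  rw [← Finset.mul_sum]
end

section
/- Let n = 2m with m ≥ 1, let p be a non-signalling correlation for the n-fold parallel repetition of Feige's game, let I ⊆ {1,…,n} have exactly m elements, and let z, z' ∈ {0,1}^n be arbitrary. Then Σ_{x,y ∈ {0,1}^n} p(a_I(y), b_I(x) | x, y) ≤ 2^{m−1} · ( Σ_{y ∈ {0,1}^n} Σ_{a ∈ {0,1,⊥}^n} Σ_{u : I → {0,1}} p(a, b_I(u) | z, y) + Σ_{x ∈ {0,1}^n} Σ_{b ∈ {0,1,⊥}^n} Σ_{v : I^c → {0,1}} p(a_I(v), b | x, z') ), where b_I(u) ∈ {0,1,⊥}^n is given by (b_I(u))_i = u(i) for i ∈ I and ⊥ otherwise, and a_I(v) ∈ {0,1,⊥}^n is given by (a_I(v))_i = ⊥ for i ∈ I and v(i) otherwise. -/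
open BigOperators

lemma split_sum {N : ℕ} (P : Fin N → Prop) [DecidablePred P]
    (g : ({i : Fin N // P i} → Bool) → ℝ) :
    ∑ x : Fin N → Bool, g (fun i => x i.1)
      = (2:ℝ) ^ (Fintype.card {i : Fin N // ¬ P i}) * ∑ u, g u := by
  calc ∑ x : Fin N → Bool, g (fun i => x i.1)
      = ∑ q : ({i : Fin N // P i} → Bool) × ({i : Fin N // ¬ P i} → Bool), g q.1 :=
        Fintype.sum_equiv (Equiv.piEquivPiSubtypeProd P fun _ => Bool) _ _ (fun x => rfl)
    _ = (2:ℝ) ^ (Fintype.card {i : Fin N // ¬ P i}) * ∑ u, g u := by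
        rw [Fintype.sum_prod_type]
        simp [Finset.sum_const, Fintype.card_fun, Finset.mul_sum, mul_comm]

/-- Key estimate for `m`-element subsets in the `2m`-fold parallel repetition of Feige's
game.  Questions are tuples in `Fin (2m) → Bool`, answers in `Fin (2m) → Option Bool`
(`none` = `⊥`).  For `I ⊆ {1, …, 2m}`, `a_I(y)_i = ⊥` if `i ∈ I` and `y_i` otherwise, and
`b_I(x)_i = x_i` if `i ∈ I` and `⊥` otherwise; for `u : I → {0,1}` we write `b_I(u)` for
the answer which is `u(i)` on `I` and `⊥` outside, and for `v : I^c → {0,1}` we write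
`a_I(v)` for the answer which is `⊥` on `I` and `v(i)` outside.  If `p` is non-signalling
and `|I| = m`, then for all `z, z'`:
`Σ_{x,y} p(a_I(y), b_I(x)|x,y) ≤ 2^{m-1}·(Σ_{y,a,u} p(a, b_I(u)|z,y) + Σ_{x,b,v} p(a_I(v), b|x,z'))`. -/
theorem feige_ns_half_subset_bound (m : ℕ) (hm : 1 ≤ m)
    (p : (Fin (2 * m) → Option Bool) → (Fin (2 * m) → Option Bool) →
         (Fin (2 * m) → Bool) → (Fin (2 * m) → Bool) → ℝ)
    (hpos : ∀ a b x y, 0 ≤ p a b x y)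
    (hnorm : ∀ x y, ∑ a, ∑ b, p a b x y = 1)
    (hnsA : ∀ b x x' y, ∑ a, p a b x y = ∑ a, p a b x' y)
    (hnsB : ∀ a x y y', ∑ b, p a b x y = ∑ b, p a b x y')
    (I : Finset (Fin (2 * m))) (hI : I.card = m)
    (z z' : Fin (2 * m) → Bool) :
    ∑ x : Fin (2 * m) → Bool, ∑ y : Fin (2 * m) → Bool,
      p (fun i => if i ∈ I then none else some (y i))
        (fun i => if i ∈ I then some (x i) else none) x y
    ≤ (2 : ℝ) ^ (m - 1) *
      ((∑ y : Fin (2 * m) → Bool, ∑ a : Fin (2 * m) → Option Bool,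
          ∑ u : ({i : Fin (2 * m) // i ∈ I}) → Bool,
            p a (fun i => if h : i ∈ I then some (u ⟨i, h⟩) else none) z y)
        + (∑ x : Fin (2 * m) → Bool, ∑ b : Fin (2 * m) → Option Bool,
          ∑ v : ({i : Fin (2 * m) // i ∉ I}) → Bool,
            p (fun i => if h : i ∈ I then none else some (v ⟨i, h⟩)) b x z')) := by
  have hcI : Fintype.card {i : Fin (2 * m) // i ∈ I} = m := by
    simp [Fintype.card_subtype, hI]
  have hcIc : Fintype.card {i : Fin (2 * m) // ¬ i ∈ I} = m := by
    have h2 := Fintype.card_subtype_compl (fun i : Fin (2 * m) => i ∈ I)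
    rw [h2, hcI, Fintype.card_fin]; omega
  have hcIcc : Fintype.card {i : Fin (2 * m) // ¬ i ∉ I} = m := by
    simp only [not_not]; exact hcI
  -- function rewrites
  have hbfun : ∀ x : Fin (2 * m) → Bool,
      (fun i => if i ∈ I then some (x i) else none)
        = (fun i => if h : i ∈ I then
            some ((fun j : {i : Fin (2 * m) // i ∈ I} => x j.1) ⟨i, h⟩) else none) := by
    intro x; funext i; by_cases h : i ∈ I <;> simp [h]
  have hafun : ∀ y : Fin (2 * m) → Bool,
      (fun i => if i ∈ I then none else some (y i))
        = (fun i => if h : i ∈ I then none else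
            some ((fun j : {i : Fin (2 * m) // i ∉ I} => y j.1) ⟨i, h⟩)) := by
    intro y; funext i; by_cases h : i ∈ I <;> simp [h]
  set L : ℝ := ∑ x : Fin (2 * m) → Bool, ∑ y : Fin (2 * m) → Bool,
      p (fun i => if i ∈ I then none else some (y i))
        (fun i => if i ∈ I then some (x i) else none) x y with hL
  set S1 : ℝ := ∑ y : Fin (2 * m) → Bool, ∑ a : Fin (2 * m) → Option Bool,
          ∑ u : ({i : Fin (2 * m) // i ∈ I}) → Bool,
            p a (fun i => if h : i ∈ I then some (u ⟨i, h⟩) else none) z y with hS1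
  set S2 : ℝ := ∑ x : Fin (2 * m) → Bool, ∑ b : Fin (2 * m) → Option Bool,
          ∑ v : ({i : Fin (2 * m) // i ∉ I}) → Bool,
            p (fun i => if h : i ∈ I then none else some (v ⟨i, h⟩)) b x z' with hS2
  -- bound 1
  have hb1 : L ≤ (2:ℝ) ^ m * S1 := by
    have step1 : L ≤ ∑ x : Fin (2 * m) → Bool, ∑ y : Fin (2 * m) → Bool,
        ∑ a : Fin (2 * m) → Option Bool,
        p a (fun i => if i ∈ I then some (x i) else none) z y := by
      rw [hL]
      apply Finset.sum_le_sum; intro x _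
      apply Finset.sum_le_sum; intro y _
      calc p (fun i => if i ∈ I then none else some (y i))
            (fun i => if i ∈ I then some (x i) else none) x y
          ≤ ∑ a : Fin (2 * m) → Option Bool,
              p a (fun i => if i ∈ I then some (x i) else none) x y :=
            Finset.single_le_sum (f := fun a => p a (fun i => if i ∈ I then some (x i) else none) x y)
              (fun a _ => hpos _ _ _ _) (Finset.mem_univ _)
        _ = ∑ a : Fin (2 * m) → Option Bool,
              p a (fun i => if i ∈ I then some (x i) else none) z y := hnsA _ _ _ _
    have step2 : ∑ x : Fin (2 * m) → Bool, ∑ y : Fin (2 * m) → Bool,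
        ∑ a : Fin (2 * m) → Option Bool,
        p a (fun i => if i ∈ I then some (x i) else none) z y = (2:ℝ) ^ m * S1 := by
      have key := split_sum (N := 2 * m) (fun i => i ∈ I)
        (fun u => ∑ y : Fin (2 * m) → Bool, ∑ a : Fin (2 * m) → Option Bool,
          p a (fun i => if h : i ∈ I then some (u ⟨i, h⟩) else none) z y)
      rw [hcIc] at key
      have lhs_eq : ∑ x : Fin (2 * m) → Bool, ∑ y : Fin (2 * m) → Bool,
          ∑ a : Fin (2 * m) → Option Bool,
          p a (fun i => if i ∈ I then some (x i) else none) z y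
          = ∑ x : Fin (2 * m) → Bool, ∑ y : Fin (2 * m) → Bool,
          ∑ a : Fin (2 * m) → Option Bool,
          p a (fun i => if h : i ∈ I then
            some ((fun j : {i : Fin (2 * m) // i ∈ I} => x j.1) ⟨i, h⟩) else none) z y := by
        apply Finset.sum_congr rfl; intro x _
        rw [hbfun x]
      rw [lhs_eq]
      have rhs_eq : S1 = ∑ u : ({i : Fin (2 * m) // i ∈ I}) → Bool,
          ∑ y : Fin (2 * m) → Bool, ∑ a : Fin (2 * m) → Option Bool,
            p a (fun i => if h : i ∈ I then some (u ⟨i, h⟩) else none) z y := by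
        rw [hS1]
        calc ∑ y : Fin (2 * m) → Bool, ∑ a : Fin (2 * m) → Option Bool,
              ∑ u : ({i : Fin (2 * m) // i ∈ I}) → Bool,
                p a (fun i => if h : i ∈ I then some (u ⟨i, h⟩) else none) z y
            = ∑ y : Fin (2 * m) → Bool, ∑ u : ({i : Fin (2 * m) // i ∈ I}) → Bool,
              ∑ a : Fin (2 * m) → Option Bool,
                p a (fun i => if h : i ∈ I then some (u ⟨i, h⟩) else none) z y :=
              Finset.sum_congr rfl fun y _ => Finset.sum_comm
          _ = ∑ u : ({i : Fin (2 * m) // i ∈ I}) → Bool,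
              ∑ y : Fin (2 * m) → Bool, ∑ a : Fin (2 * m) → Option Bool,
                p a (fun i => if h : i ∈ I then some (u ⟨i, h⟩) else none) z y :=
              Finset.sum_comm
      rw [rhs_eq]
      convert key using 3
      exact congrArg (fun inst => @Finset.univ _ inst) (Subsingleton.elim _ _)
    linarith [step1, step2.le]
  -- bound 2
  have hb2 : L ≤ (2:ℝ) ^ m * S2 := by
    have step1 : L ≤ ∑ x : Fin (2 * m) → Bool, ∑ y : Fin (2 * m) → Bool,
        ∑ b : Fin (2 * m) → Option Bool,
        p (fun i => if i ∈ I then none else some (y i)) b x z' := by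
      rw [hL]
      apply Finset.sum_le_sum; intro x _
      apply Finset.sum_le_sum; intro y _
      calc p (fun i => if i ∈ I then none else some (y i))
            (fun i => if i ∈ I then some (x i) else none) x y
          ≤ ∑ b : Fin (2 * m) → Option Bool,
              p (fun i => if i ∈ I then none else some (y i)) b x y :=
            Finset.single_le_sum (f := fun b => p (fun i => if i ∈ I then none else some (y i)) b x y)
              (fun b _ => hpos _ _ _ _) (Finset.mem_univ _)
        _ = ∑ b : Fin (2 * m) → Option Bool,
              p (fun i => if i ∈ I then none else some (y i)) b x z' := hnsB _ _ _ _
    have step2 : ∑ x : Fin (2 * m) → Bool, ∑ y : Fin (2 * m) → Bool,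
        ∑ b : Fin (2 * m) → Option Bool,
        p (fun i => if i ∈ I then none else some (y i)) b x z' = (2:ℝ) ^ m * S2 := by
      have inner : ∀ x : Fin (2 * m) → Bool,
          ∑ y : Fin (2 * m) → Bool, ∑ b : Fin (2 * m) → Option Bool,
            p (fun i => if i ∈ I then none else some (y i)) b x z'
          = (2:ℝ) ^ m * ∑ v : ({i : Fin (2 * m) // i ∉ I}) → Bool,
            ∑ b : Fin (2 * m) → Option Bool,
              p (fun i => if h : i ∈ I then none else some (v ⟨i, h⟩)) b x z' := by
        intro x
        have key := split_sum (N := 2 * m) (fun i => i ∉ I)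
          (fun v => ∑ b : Fin (2 * m) → Option Bool,
            p (fun i => if h : i ∈ I then none else some (v ⟨i, h⟩)) b x z')
        rw [hcIcc] at key
        have lhs_eq : ∑ y : Fin (2 * m) → Bool, ∑ b : Fin (2 * m) → Option Bool,
            p (fun i => if i ∈ I then none else some (y i)) b x z'
            = ∑ y : Fin (2 * m) → Bool, ∑ b : Fin (2 * m) → Option Bool,
            p (fun i => if h : i ∈ I then none else
              some ((fun j : {i : Fin (2 * m) // i ∉ I} => y j.1) ⟨i, h⟩)) b x z' := by
          apply Finset.sum_congr rfl; intro y _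
          rw [hafun y]
        rw [lhs_eq]
        convert key using 3
      calc ∑ x : Fin (2 * m) → Bool, ∑ y : Fin (2 * m) → Bool,
            ∑ b : Fin (2 * m) → Option Bool,
            p (fun i => if i ∈ I then none else some (y i)) b x z'
          = ∑ x : Fin (2 * m) → Bool, ((2:ℝ) ^ m * ∑ v : ({i : Fin (2 * m) // i ∉ I}) → Bool,
              ∑ b : Fin (2 * m) → Option Bool,
              p (fun i => if h : i ∈ I then none else some (v ⟨i, h⟩)) b x z') :=
            Finset.sum_congr rfl (fun x _ => inner x)
        _ = (2:ℝ) ^ m * S2 := by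
            rw [← Finset.mul_sum]
            congr 1
            rw [hS2]
            exact Finset.sum_congr rfl fun x _ => Finset.sum_comm
    linarith [step1, step2.le]
  -- combine
  have hpow : (2:ℝ) ^ m = 2 * (2:ℝ) ^ (m - 1) := by
    conv_lhs => rw [show m = (m - 1) + 1 by omega]
    ring
  rw [hpow] at hb1 hb2
  rw [mul_add]
  linarith
end

section
/- Let ν = (ν_{ij}) be an n×n matrix of strictly positive reals and let {P_1, …, P_n} and {Q_1, …, Q_n} be projective measurements on ℂ^d (each P_i and Q_j a self-adjoint idempotent d×d complex matrix, with Σ_i P_i = I and Σ_j Q_j = I) satisfying P_a Q_b P_a = ν_{ab} P_a and Q_b P_a Q_b = ν_{ab} Q_b for all a, b. Then all the projections have the same rank τ, i.e. rank P_a = rank Q_b = τ for all a, b, and d = n·τ; in particular n divides d. -/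
open BigOperators Matrix

lemma herm_idem_eigenvalues {d : ℕ} {A : Matrix (Fin d) (Fin d) ℂ}
    (hA : A.IsHermitian) (hidem : A * A = A) (i : Fin d) :
    hA.eigenvalues i = 0 ∨ hA.eigenvalues i = 1 := by
  obtain ⟨V, hV⟩ : ∃ V : Matrix (Fin d) (Fin d) ℂ, V = hA.eigenvectorUnitary := ⟨_, rfl⟩
  have hD : star V * A * V = Matrix.diagonal (fun j => ((hA.eigenvalues j : ℝ) : ℂ)) := by
    rw [hV]; have := hA.conjStarAlgAut_star_eigenvectorUnitary; rw [Unitary.conjStarAlgAut_star_apply] at this; exact this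
  have hUU : V * star V = 1 := by rw [hV]; exact Unitary.coe_mul_star_self _
  have hDD : (Matrix.diagonal (fun j => ((hA.eigenvalues j : ℝ) : ℂ))) *
      (Matrix.diagonal (fun j => ((hA.eigenvalues j : ℝ) : ℂ))) =
      Matrix.diagonal (fun j => ((hA.eigenvalues j : ℝ) : ℂ)) := by
    rw [← hD]
    calc (star V * A * V) * (star V * A * V)
        = star V * (A * (V * star V) * A) * V := by simp only [Matrix.mul_assoc]
      _ = star V * A * V := by rw [hUU, Matrix.mul_one, hidem, Matrix.mul_assoc]
  have h0 := congrArg (fun M => M i i) hDD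
  simp only [Matrix.diagonal_mul_diagonal, Matrix.diagonal_apply_eq, Function.comp_apply,
    Pi.mul_apply] at h0
  have h2 : (hA.eigenvalues i) * (hA.eigenvalues i) = hA.eigenvalues i := by
    exact_mod_cast h0
  rcases mul_eq_zero.mp (show hA.eigenvalues i * (hA.eigenvalues i - 1) = 0 by nlinarith [h2]) with h | h
  · exact Or.inl h
  · exact Or.inr (by linarith)

lemma herm_idem_trace_eq_rank {d : ℕ} {A : Matrix (Fin d) (Fin d) ℂ}
    (hA : A.IsHermitian) (hidem : A * A = A) :
    A.trace = (A.rank : ℂ) := by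
  classical
  have htr : A.trace = ∑ i, ((hA.eigenvalues i : ℝ) : ℂ) := by
    conv_lhs => rw [hA.spectral_theorem]
    rw [Unitary.conjStarAlgAut_apply, Matrix.trace_mul_comm, ← Matrix.mul_assoc, Unitary.coe_star_mul_self, Matrix.one_mul,
      Matrix.trace_diagonal]
    rfl
  have hsum : ∑ i, ((hA.eigenvalues i : ℝ) : ℂ)
      = ∑ i, (if hA.eigenvalues i ≠ 0 then (1 : ℂ) else 0) := by
    refine Finset.sum_congr rfl fun i _ => ?_
    rcases herm_idem_eigenvalues hA hidem i with h | h <;> simp [h]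
  rw [htr, hsum, Finset.sum_boole, hA.rank_eq_card_non_zero_eigs, Fintype.card_subtype]

/-- Let `ν` be an `n × n` matrix of strictly positive reals and let `{P_1, …, P_n}` and
`{Q_1, …, Q_n}` be projective measurements on `ℂ^d` satisfying the `ν`-biased relations
`P_a Q_b P_a = ν_{ab} P_a` and `Q_b P_a Q_b = ν_{ab} Q_b`.  Then all projections have the
same rank `τ`, and `d = n·τ`; in particular `n` divides `d`. -/
theorem nu_biased_measurement_ranks (n d : ℕ) (ν : Fin n → Fin n → ℝ)
    (hν : ∀ i j, 0 < ν i j)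
    (P Q : Fin n → Matrix (Fin d) (Fin d) ℂ)
    (hPh : ∀ a, (P a).IsHermitian) (hPi : ∀ a, P a * P a = P a)
    (hPs : ∑ a, P a = 1)
    (hQh : ∀ b, (Q b).IsHermitian) (hQi : ∀ b, Q b * Q b = Q b)
    (hQs : ∑ b, Q b = 1)
    (hPQ : ∀ a b, P a * Q b * P a = (ν a b : ℂ) • P a)
    (hQP : ∀ a b, Q b * P a * Q b = (ν a b : ℂ) • Q b) :
    ∃ τ : ℕ, (∀ a, (P a).rank = τ) ∧ (∀ b, (Q b).rank = τ) ∧ d = n * τ ∧ n ∣ d := by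
  rcases Nat.eq_zero_or_pos n with hn | hn
  · subst hn
    have hd : d = 0 := by
      by_contra hd
      have h0 : (0 : Matrix (Fin d) (Fin d) ℂ) = 1 := by simpa using hPs
      have := congrArg (fun M => M ⟨0, Nat.pos_of_ne_zero hd⟩ ⟨0, Nat.pos_of_ne_zero hd⟩) h0
      simp [Matrix.one_apply] at this
    exact ⟨0, fun a => a.elim0, fun b => b.elim0, by simp [hd], by simp [hd]⟩
  have hkey : ∀ a b, (P a).rank = (Q b).rank := by
    intro a b
    have hle : ∀ (A B : Matrix (Fin d) (Fin d) ℂ) (c : ℝ), 0 < c →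
        A * B * A = (c : ℂ) • A → A.rank ≤ B.rank := by
      intro A B c hc hABA
      have hA : A = (((c : ℂ)⁻¹ • (1 : Matrix (Fin d) (Fin d) ℂ))) * (A * B * A) := by
        rw [hABA, Matrix.smul_mul, Matrix.one_mul, smul_smul,
          inv_mul_cancel₀ (show (c : ℂ) ≠ 0 by exact_mod_cast hc.ne'), one_smul]
      calc A.rank ≤ (A * B * A).rank := by
            conv_lhs => rw [hA]
            exact Matrix.rank_mul_le_right ((c : ℂ)⁻¹ • (1 : Matrix (Fin d) (Fin d) ℂ)) (A * B * A)
        _ ≤ (A * B).rank := Matrix.rank_mul_le_left (A * B) A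
        _ ≤ B.rank := Matrix.rank_mul_le_right A B
    exact le_antisymm (hle _ _ _ (hν a b) (hPQ a b)) (hle _ _ _ (hν a b) (hQP a b))
  set a0 : Fin n := ⟨0, hn⟩
  have hPrank : ∀ a, (P a).rank = (Q a0).rank := fun a => hkey a a0
  have hQrank : ∀ b, (Q b).rank = (Q a0).rank := fun b => (hkey a0 b).symm.trans (hkey a0 a0)
  have hdnτ : d = n * (Q a0).rank := by
    have h1 := congrArg Matrix.trace hPs
    rw [Matrix.trace_sum, Matrix.trace_one] at h1
    have h2 : ∑ a, (P a).trace = ∑ _a : Fin n, (((Q a0).rank : ℂ)) := by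
      refine Finset.sum_congr rfl fun a _ => ?_
      rw [herm_idem_trace_eq_rank (hPh a) (hPi a), hPrank a]
    rw [h2, Finset.sum_const, Finset.card_univ, Fintype.card_fin] at h1
    have h3 : ((n * (Q a0).rank : ℕ) : ℂ) = (d : ℂ) := by
      push_cast
      simpa [Fintype.card_fin, nsmul_eq_mul] using h1
    exact_mod_cast h3.symm
  exact ⟨(Q a0).rank, hPrank, hQrank, hdnτ, ⟨(Q a0).rank, hdnτ⟩⟩
end
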